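/- arXiv:1901.11189 — 2 statements merged into one kernel-verified Lean document; each statement's English description precedes it below -/
import Mathlib

section
/- Let G be a cyclic connected undirected graph with cycle basis Σ and winding map w_Σ : 𝕋ⁿ₀ → ℤ^{m−n+1}. Then the family {closure(Ω^G_u) : u ∈ Img(w_Σ)} of closed winding cells is a partition of 𝕋ⁿ, in the sense that: (i) 𝕋ⁿ = ⋃_{u ∈ Img(w_Σ)} closure(Ω^G_u); (ii) for all u, v ∈ Img(w_Σ) with u ≠ v, Ω^G_u ∩ Ω^G_v = ∅. -/
open scoped BigOperators
open Real Matrix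

noncomputable section

/-- Counterclockwise difference on the circle: the representative of `α - β` in `[-π, π)`. -/
def dcc (α β : Real.Angle) : ℝ := -((β - α).toReal)

/-- An oriented (multi)graph on node set `Fin n` with edge set `Fin m`;
each edge has a source and a target (sink) node. -/
structure OGraph (n m : ℕ) where
  src : Fin m → Fin n
  tgt : Fin m → Fin n
  noLoop : ∀ e, src e ≠ tgt e

namespace OGraph

variable {n m : ℕ}

/-- Incidence matrix `B`: entry `+1` at the sink (target) of an edge, `-1` at its source. -/
def inc (G : OGraph n m) : Matrix (Fin n) (Fin m) ℝ :=
  Matrix.of fun k e => if k = G.tgt e then (1 : ℝ) else if k = G.src e then -1 else 0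

/-- Two nodes are adjacent if some edge joins them. -/
def adjRel (G : OGraph n m) (i j : Fin n) : Prop :=
  ∃ e, (G.src e = i ∧ G.tgt e = j) ∨ (G.src e = j ∧ G.tgt e = i)

/-- The (undirected) graph is connected. -/
def Connected (G : OGraph n m) : Prop :=
  ∀ i j : Fin n, Relation.ReflTransGen G.adjRel i j

/-- The vector `(Bᵀ θ)` of counterclockwise differences along the oriented edges. -/
def edgeDiff (G : OGraph n m) (θ : Fin n → Real.Angle) : Fin m → ℝ :=
  fun e => dcc (θ (G.tgt e)) (θ (G.src e))

/-- Membership in the punctured `n`-torus: all edge differences have geodesic length `< π`. -/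
def Punctured (G : OGraph n m) (θ : Fin n → Real.Angle) : Prop :=
  ∀ e, |G.edgeDiff θ e| < π

/-- A cycle in the graph: a cyclically ordered sequence of `k + 3 ≥ 3` distinct nodes,
any two consecutive ones joined by an edge, traversed positively or negatively. -/
structure Cycle (G : OGraph n m) where
  k : ℕ
  vert : Fin (k + 3) → Fin n
  vertInj : Function.Injective vert
  edge : Fin (k + 3) → Fin m
  dir : Fin (k + 3) → Bool
  pos_compat : ∀ i, dir i = true → G.tgt (edge i) = vert i ∧ G.src (edge i) = vert (i + 1)
  neg_compat : ∀ i, dir i = false → G.src (edge i) = vert i ∧ G.tgt (edge i) = vert (i + 1)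

namespace Cycle

variable {G : OGraph n m}

/-- The number of nodes of the cycle. -/
def len (σ : G.Cycle) : ℕ := σ.k + 3

/-- Signed cycle vector `v_σ ∈ {-1,0,1}^m`. -/
def sgnVec (σ : G.Cycle) : Fin m → ℝ := fun e =>
  ∑ i : Fin (σ.k + 3), if σ.edge i = e then (if σ.dir i then (1 : ℝ) else -1) else 0

/-- Winding number of `θ` along the cycle `σ`. -/
def winding (σ : G.Cycle) (θ : Fin n → Real.Angle) : ℝ :=
  (1 / (2 * π)) * ∑ i : Fin (σ.k + 3), dcc (θ (σ.vert i)) (θ (σ.vert (i + 1)))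

end Cycle

/-- A family of cycles is a cycle basis if the signed cycle vectors form a basis
of the cycle space `Ker B`. -/
def IsCycleBasis (G : OGraph n m) (c : Fin (m + 1 - n) → G.Cycle) : Prop :=
  LinearIndependent ℝ (fun i => (c i).sgnVec) ∧
    Submodule.span ℝ (Set.range fun i => (c i).sgnVec) = LinearMap.ker G.inc.mulVecLin

/-- Cycle–edge matrix `C_Σ`, whose rows are the signed cycle vectors. -/
def cycMat (G : OGraph n m) (c : Fin (m + 1 - n) → G.Cycle) :
    Matrix (Fin (m + 1 - n)) (Fin m) ℝ :=
  Matrix.of fun i e => (c i).sgnVec e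

/-- Winding map along a family of cycles. -/
def windingMap (G : OGraph n m) (c : Fin (m + 1 - n) → G.Cycle)
    (θ : Fin n → Real.Angle) : Fin (m + 1 - n) → ℝ :=
  fun i => (c i).winding θ

/-- Image of the winding map over the punctured torus. -/
def windingImage (G : OGraph n m) (c : Fin (m + 1 - n) → G.Cycle) :
    Set (Fin (m + 1 - n) → ℝ) :=
  {u | ∃ θ, G.Punctured θ ∧ G.windingMap c θ = u}

/-- The `u`-winding cell `Ω^G_u = w_Σ⁻¹(u)`. -/
def windingCell (G : OGraph n m) (c : Fin (m + 1 - n) → G.Cycle)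
    (u : Fin (m + 1 - n) → ℝ) : Set (Fin n → Real.Angle) :=
  {θ | G.Punctured θ ∧ G.windingMap c θ = u}

end OGraph

/-- `(f, θ)` is a solution of the flow network problem for `(G, {h_e}, p, γ)`. -/
def IsFlowSol {n m : ℕ} (G : OGraph n m) (a : Fin m → ℝ) (h : Fin m → ℝ → ℝ)
    (p : Fin n → ℝ) (γ : ℝ) (f : Fin m → ℝ) (θ : Fin n → Real.Angle) : Prop :=
  G.inc.mulVec f = p ∧ (∀ e, f e = a e * h e (G.edgeDiff θ e)) ∧
    ∀ e, |G.edgeDiff θ e| ≤ γ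

/-- A flow function: continuously differentiable, `2π`-periodic, odd. -/
def IsFlowFun (h : ℝ → ℝ) : Prop :=
  ContDiff ℝ 1 h ∧ Function.Periodic h (2 * π) ∧ ∀ x, h (-x) = -h x

/-- Monotone on a set: strictly increasing or strictly decreasing. -/
def StrictMonoOrAntiOn (h : ℝ → ℝ) (s : Set ℝ) : Prop :=
  StrictMonoOn h s ∨ StrictAntiOn h s

/-- `ψ` is obtained from `θ` by a rigid rotation `rot_s`, `s ∈ [-π, π)`. -/
def RotEquiv {n : ℕ} (θ ψ : Fin n → Real.Angle) : Prop :=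
  ∃ s ∈ Set.Ico (-π) π, ∀ i, ψ i = θ i + (s : Real.Angle)

/-- `N` is the Moore–Penrose pseudoinverse of `M`. -/
def IsMoorePenrose {k l : ℕ} (M : Matrix (Fin k) (Fin l) ℝ)
    (N : Matrix (Fin l) (Fin k) ℝ) : Prop :=
  M * N * M = M ∧ N * M * N = N ∧ (M * N)ᵀ = M * N ∧ (N * M)ᵀ = N * M

/-- `D`-weighted norm `‖v‖_D = ‖D^{1/2} v‖₂` for a positive diagonal weight `d`. -/
def wNorm {k : ℕ} (d v : Fin k → ℝ) : ℝ := Real.sqrt (∑ e, d e * v e ^ 2)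

/-- `∞`-norm of a matrix: maximum absolute row sum. -/
def matInfNorm {k l : ℕ} (M : Matrix (Fin k) (Fin l) ℝ) : ℝ := ⨆ i, ∑ j, |M i j|

/-- The extended flow function `h_γ` (one scalar component). -/
def extFlow (h : ℝ → ℝ) (γ : ℝ) : ℝ → ℝ := fun y =>
  if γ ≤ y then deriv h γ * (y - γ) + h γ
  else if y ≤ -γ then deriv h γ * (y + γ) + h (-γ)
  else h y

/-- The vector `h_γ^{-1}(𝒜^{-1} f)`. -/
def hGammaInv {m : ℕ} (h : Fin m → ℝ → ℝ) (γ : ℝ) (a f : Fin m → ℝ) : Fin m → ℝ :=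
  fun e => Function.invFun (extFlow (h e) γ) (f e / a e)

/-- `(L_min)_{ee} = min_{y ∈ [-γ,γ]} h_e'(y)`. -/
def lminOf {m : ℕ} (h : Fin m → ℝ → ℝ) (γ : ℝ) : Fin m → ℝ :=
  fun e => sInf (deriv (h e) '' Set.Icc (-γ) γ)

/-- `(L_max)_{ee} = max_{y ∈ [-γ,γ]} h_e'(y)`. -/
def lmaxOf {m : ℕ} (h : Fin m → ℝ → ℝ) (γ : ℝ) : Fin m → ℝ :=
  fun e => sSup (deriv (h e) '' Set.Icc (-γ) γ)

/-- The `D`-weighted cycle projection `𝒫_D = I - D𝒜Bᵀ(B D𝒜 Bᵀ)† B`, where `N`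
stands for the pseudoinverse `(B D𝒜 Bᵀ)†`. -/
def cycProj {n m : ℕ} (G : OGraph n m) (a d : Fin m → ℝ)
    (N : Matrix (Fin n) (Fin n) ℝ) : Matrix (Fin m) (Fin m) ℝ :=
  1 - Matrix.diagonal d * Matrix.diagonal a * G.incᵀ * N * G.inc

/-- The `u`-winding fixed-point map `T_u`. -/
def Tmap {n m : ℕ} (G : OGraph n m) (a : Fin m → ℝ) (h : Fin m → ℝ → ℝ) (γ : ℝ)
    (N : Matrix (Fin n) (Fin n) ℝ) (Cdag : Matrix (Fin m) (Fin (m + 1 - n)) ℝ)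
    (u : Fin (m + 1 - n) → ℝ) (f : Fin m → ℝ) : Fin m → ℝ :=
  f - (cycProj G a (lminOf h γ) N).mulVec
    ((Matrix.diagonal (lminOf h γ) * Matrix.diagonal a).mulVec
      (hGammaInv h γ a f - (2 * π) • Cdag.mulVec u))

/-- The `u`-winding balance equation. -/
def WindingBalance {n m : ℕ} (G : OGraph n m) (a : Fin m → ℝ) (h : Fin m → ℝ → ℝ)
    (p : Fin n → ℝ) (γ : ℝ) (N : Matrix (Fin n) (Fin n) ℝ)
    (Cdag : Matrix (Fin m) (Fin (m + 1 - n)) ℝ) (u : Fin (m + 1 - n) → ℝ)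
    (f : Fin m → ℝ) : Prop :=
  G.inc.mulVec f = p ∧
    (cycProj G a (lminOf h γ) N).mulVec
      ((Matrix.diagonal (lminOf h γ) * Matrix.diagonal a).mulVec
        (hGammaInv h γ a f - (2 * π) • Cdag.mulVec u)) = 0 ∧
    ∀ e, |f e| ≤ a e * |h e γ|



section Aux

lemma abs_toReal_lt_pi_iff {x : Real.Angle} : |x.toReal| < π ↔ x ≠ π := by
  constructor
  · intro h hx
    rw [hx, Real.Angle.toReal_pi, abs_of_pos Real.pi_pos] at h
    exact lt_irrefl _ h
  · intro h
    rcases lt_or_eq_of_le (Real.Angle.toReal_le_pi x) with h' | h'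
    · rw [abs_lt]; exact ⟨Real.Angle.neg_pi_lt_toReal x, h'⟩
    · exact absurd (Real.Angle.toReal_eq_pi_iff.mp h') h

lemma winding_eq_int {n m : ℕ} {G : OGraph n m} (σ : G.Cycle) (θ : Fin n → Real.Angle) :
    ∃ z : ℤ, σ.winding θ = (z : ℝ) ∧ |z| ≤ ((σ.k : ℤ) + 3) := by
  classical
  set s : ℝ := ∑ i : Fin (σ.k + 3), dcc (θ (σ.vert i)) (θ (σ.vert (i + 1))) with hs
  have hzero : ((s : ℝ) : Real.Angle) = ((0 : ℝ) : Real.Angle) := by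
    have h1 : ((s : ℝ) : Real.Angle)
        = ∑ i : Fin (σ.k + 3), -(θ (σ.vert (i + 1)) - θ (σ.vert i)) := by
      rw [hs, ← Real.Angle.coe_coeHom, map_sum]
      refine Finset.sum_congr rfl fun i _ => ?_
      show ((dcc (θ (σ.vert i)) (θ (σ.vert (i + 1))) : ℝ) : Real.Angle) = _
      rw [dcc, Real.Angle.coe_neg, Real.Angle.coe_toReal]
    have h2 : ∑ i : Fin (σ.k + 3), θ (σ.vert (i + 1)) = ∑ i : Fin (σ.k + 3), θ (σ.vert i) :=
      Fintype.sum_equiv (Equiv.addRight 1) _ _ (fun i => rfl)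
    rw [h1, Real.Angle.coe_zero]
    simp only [neg_sub, Finset.sum_sub_distrib, h2, sub_self]
  obtain ⟨k, hk⟩ := Real.Angle.angle_eq_iff_two_pi_dvd_sub.mp hzero
  rw [sub_zero] at hk
  have hw : σ.winding θ = (1 / (2 * π)) * s := rfl
  refine ⟨k, ?_, ?_⟩
  · rw [hw, hk]
    field_simp
  · have hb : |s| ≤ ((σ.k : ℝ) + 3) * π := by
      calc |s| ≤ ∑ i : Fin (σ.k + 3), |dcc (θ (σ.vert i)) (θ (σ.vert (i + 1)))| := by
            rw [hs]; exact Finset.abs_sum_le_sum_abs _ _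
        _ ≤ ∑ _i : Fin (σ.k + 3), π := by
            refine Finset.sum_le_sum fun i _ => ?_
            rw [dcc, abs_neg]
            exact Real.Angle.abs_toReal_le_pi _
        _ = ((σ.k : ℝ) + 3) * π := by
            rw [Finset.sum_const, Finset.card_univ, Fintype.card_fin, nsmul_eq_mul]
            push_cast; ring
    have hkr : |(k : ℝ)| ≤ (σ.k : ℝ) + 3 := by
      rw [hk, abs_mul, abs_of_pos (by positivity : (0 : ℝ) < 2 * π)] at hb
      nlinarith [Real.pi_pos, abs_nonneg ((k : ℝ))]
    rw [← Int.cast_abs] at hkr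
    exact_mod_cast hkr

lemma punctured_dense {n m : ℕ} (G : OGraph n m) (θ : Fin n → Real.Angle) :
    θ ∈ closure {ψ | G.Punctured ψ} := by
  classical
  set x : Fin n → ℝ := fun i => (θ i).toReal with hx
  set d : Fin m → ℝ := fun e => x (G.src e) - x (G.tgt e) with hd
  set F : ℝ → (Fin n → Real.Angle) := fun t i => (((1 - t) * x i : ℝ) : Real.Angle) with hF
  set B : Set ℝ := ⋃ e : Fin m, {1 - π / d e, 1 + π / d e} with hB
  have hBfin : B.Finite :=
    Set.finite_iUnion fun e => (Set.finite_singleton _).insert _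
  have hFcont : Continuous F := by
    refine continuous_pi fun i => Real.Angle.continuous_coe.comp ?_
    exact (continuous_const.sub continuous_id).mul continuous_const
  have hF0 : F 0 = θ := by
    funext i
    simp only [hF, sub_zero, one_mul, hx, Real.Angle.coe_toReal]
  have htend : Filter.Tendsto F (nhdsWithin 0 (Set.Ioi (0 : ℝ))) (nhds θ) := by
    have := (hFcont.tendsto 0).mono_left (nhdsWithin_le_nhds (s := Set.Ioi (0 : ℝ)))
    rwa [hF0] at this
  have hBd : (B \ {0})ᶜ ∈ nhds (0 : ℝ) :=
    ((hBfin.diff : (B \ {0}).Finite).isClosed.isOpen_compl).mem_nhds (by simp)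
  have hev : ∀ᶠ t in nhdsWithin 0 (Set.Ioi (0 : ℝ)), F t ∈ {ψ | G.Punctured ψ} := by
    have h1 : Set.Ioo (0 : ℝ) 1 ∈ nhdsWithin 0 (Set.Ioi (0 : ℝ)) :=
      Ioo_mem_nhdsGT_of_mem ⟨le_refl 0, one_pos⟩
    have h2 : (B \ {0})ᶜ ∈ nhdsWithin 0 (Set.Ioi (0 : ℝ)) := nhdsWithin_le_nhds hBd
    filter_upwards [h1, h2] with t ht hTB
    have htB : t ∉ B := fun htB' => hTB ⟨htB', ne_of_gt ht.1⟩
    intro e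
    have hx1 : ∀ i, -π < x i := fun i => (θ i).neg_pi_lt_toReal
    have hx2 : ∀ i, x i ≤ π := fun i => (θ i).toReal_le_pi
    have hde : |d e| < 2 * π := by
      rw [abs_lt, hd]
      constructor
      · have := hx1 (G.src e); have := hx2 (G.tgt e); simp only; linarith
      · have := hx2 (G.src e); have := hx1 (G.tgt e); simp only; linarith
    have hsub : F t (G.src e) - F t (G.tgt e) = (((1 - t) * d e : ℝ) : Real.Angle) := by
      simp only [hF, ← Real.Angle.coe_sub]
      congr 1
      rw [hd]; ring
    have hne : (((1 - t) * d e : ℝ) : Real.Angle) ≠ ((π : ℝ) : Real.Angle) := by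
      intro hcontra
      obtain ⟨k, hk⟩ := Real.Angle.angle_eq_iff_two_pi_dvd_sub.mp hcontra
      have heq : (1 - t) * d e = π * (2 * (k : ℝ) + 1) := by linarith
      have habs : |(1 - t) * d e| < 2 * π := by
        rw [abs_mul]
        have h1t : |1 - t| < 1 := by
          rw [abs_lt]; constructor <;> [linarith [ht.2]; linarith [ht.1]]
        calc |1 - t| * |d e| ≤ 1 * |d e| :=
              mul_le_mul_of_nonneg_right h1t.le (abs_nonneg _)
          _ = |d e| := one_mul _
          _ < 2 * π := hde
      have hk2 : |2 * (k : ℝ) + 1| < 2 := by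
        rw [heq, abs_mul, abs_of_pos Real.pi_pos] at habs
        nlinarith [Real.pi_pos, abs_nonneg (2 * (k : ℝ) + 1)]
      have hk3 : k = 0 ∨ k = -1 := by
        have hk2' : |2 * k + 1| < 2 := by
          have : |((2 * k + 1 : ℤ) : ℝ)| < 2 := by push_cast; exact hk2
          exact_mod_cast this
        rw [abs_lt] at hk2'
        omega
      have hpm : (1 - t) * d e = π ∨ (1 - t) * d e = -π := by
        rcases hk3 with h | h
        · left; rw [h] at hk; push_cast at hk; linarith
        · right; rw [h] at hk; push_cast at hk; linarith
      have hd0 : d e ≠ 0 := by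
        intro h0
        rw [h0, mul_zero] at hpm
        rcases hpm with h | h <;> nlinarith [Real.pi_pos]
      apply htB
      rw [hB]
      refine Set.mem_iUnion.mpr ⟨e, ?_⟩
      rcases hpm with h | h
      · refine Set.mem_insert_iff.mpr (Or.inl ?_)
        have hdiv : π / d e = 1 - t := by rw [div_eq_iff hd0]; linarith
        linarith [hdiv]
      · refine Set.mem_insert_iff.mpr (Or.inr (Set.mem_singleton_iff.mpr ?_))
        have hdiv : π / d e = -(1 - t) := by rw [div_eq_iff hd0]; linarith
        linarith [hdiv]
    have hed : G.edgeDiff (F t) e = -((F t (G.src e) - F t (G.tgt e)).toReal) := rfl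
    show |G.edgeDiff (F t) e| < π
    rw [hed, abs_neg, hsub]
    exact abs_toReal_lt_pi_iff.mpr hne
  exact mem_closure_of_tendsto htend hev

end Aux

/-- Winding partition of the n-torus. -/
theorem winding_partition {n m : ℕ} (G : OGraph n m)
    (hconn : G.Connected) (hcyc : Nonempty G.Cycle)
    (c : Fin (m + 1 - n) → G.Cycle) (hbasis : G.IsCycleBasis c) :
    (⋃ u ∈ G.windingImage c, closure (G.windingCell c u)) = Set.univ ∧
      ∀ u ∈ G.windingImage c, ∀ v ∈ G.windingImage c, u ≠ v →
        G.windingCell c u ∩ G.windingCell c v = ∅ := by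
  constructor
  · have hfin : (G.windingImage c).Finite := by
      have hsub : G.windingImage c ⊆ Set.pi Set.univ
          (fun i => (fun z : ℤ => (z : ℝ)) ''
            (Set.Icc (-(((c i).k : ℤ) + 3)) (((c i).k : ℤ) + 3))) := by
        rintro u ⟨θ, hθ, hmap⟩ i _
        obtain ⟨z, hz1, hz2⟩ := winding_eq_int (c i) θ
        refine ⟨z, Set.mem_Icc.mpr (abs_le.mp hz2), ?_⟩
        rw [← hmap]
        exact hz1.symm
      exact Set.Finite.subset (Set.Finite.pi fun i => (Set.finite_Icc _ _).image _) hsub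
    have hcells : (⋃ u ∈ G.windingImage c, G.windingCell c u) = {θ | G.Punctured θ} := by
      ext θ
      simp only [Set.mem_iUnion, Set.mem_setOf_eq]
      constructor
      · rintro ⟨u, _, hp, _⟩
        exact hp
      · intro hp
        exact ⟨G.windingMap c θ, ⟨θ, hp, rfl⟩, hp, rfl⟩
    rw [← hfin.closure_biUnion, hcells]
    exact Set.eq_univ_of_forall fun θ => punctured_dense G θ
  · intro u _ v _ huv
    ext ψ
    simp only [Set.mem_inter_iff, Set.mem_empty_iff_false, iff_false, not_and]
    rintro ⟨_, h1⟩ ⟨_, h2⟩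
    exact huv (h1.symm.trans h2)


end
end

section
/- Let G be a connected cyclic undirected graph with n nodes, m edges, cycle basis Σ, winding map w_Σ, and cycle-edge matrix C_Σ. Fix u ∈ Img(w_Σ) and define the open convex polytope P_u = {x ∈ ℝⁿ : x ⟂ 1_n and ‖Bᵀx + 2π C_Σ† u‖_∞ < π}. Then the map ι : Ω^G_u/𝕋¹ → P_u sending [θ] to the unique x ⟂ 1_n with (Bᵀθ) = Bᵀx + 2π C_Σ† u is a continuous bijection between the reduced winding cell Ω^G_u/𝕋¹ and P_u, and it restricts to a homeomorphism on every compact subset of Ω^G_u/𝕋¹. -/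
open scoped BigOperators
open Real Matrix

noncomputable section

/-- Rotation relation on the torus: two configurations are related if they differ
by a uniform rotation. -/
def rotSetoid (n : ℕ) : Setoid (Fin n → Real.Angle) :=
  ⟨fun θ ψ => ∃ s : ℝ, ∀ i, ψ i = θ i + (s : Real.Angle),
    ⟨fun θ => ⟨0, fun i => by simp⟩,
     fun {θ ψ} hr => by
       obtain ⟨s, hs⟩ := hr
       refine ⟨-s, fun i => ?_⟩
       rw [hs i, Real.Angle.coe_neg]
       abel,
     fun {θ ψ χ} h1 h2 => by
       obtain ⟨s, hs⟩ := h1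
       obtain ⟨t, ht⟩ := h2
       refine ⟨s + t, fun i => ?_⟩
       rw [ht i, hs i, Real.Angle.coe_add]
       abel⟩⟩

/-- The rotation relation restricted to a winding cell; the quotient is the
reduced winding cell `Ω^G_u / 𝕋¹`. -/
def cellSetoid {n m : ℕ} (G : OGraph n m) (c : Fin (m + 1 - n) → G.Cycle)
    (u : Fin (m + 1 - n) → ℝ) : Setoid (G.windingCell c u) :=
  Setoid.comap Subtype.val (rotSetoid n)

section Aux

open Real

variable {n m : ℕ}

lemma dcc_coe (α β : Real.Angle) : ((dcc α β : ℝ) : Real.Angle) = α - β := by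
  unfold dcc
  rw [Real.Angle.coe_neg, Real.Angle.coe_toReal]
  abel

lemma dcc_eq_self {t : ℝ} (ht : |t| < π) {α β : Real.Angle} (h : α - β = (t : Real.Angle)) :
    dcc α β = t := by
  rw [abs_lt] at ht
  have hba : β - α = ((-t : ℝ) : Real.Angle) := by
    rw [Real.Angle.coe_neg, ← h]; abel
  unfold dcc
  rw [hba, Real.Angle.toReal_coe_eq_self_iff.mpr ⟨by linarith, by linarith⟩, neg_neg]

lemma dcc_rev {α β : Real.Angle} (h : |dcc α β| < π) : dcc β α = -dcc α β :=
  dcc_eq_self (by rwa [abs_neg]) (by rw [Real.Angle.coe_neg, dcc_coe]; abel)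

namespace OGraph

lemma mulVec_transpose_apply (G : OGraph n m) (x : Fin n → ℝ) (e : Fin m) :
    G.incᵀ.mulVec x e = x (G.tgt e) - x (G.src e) := by
  classical
  have hne := G.noLoop e
  simp only [Matrix.mulVec, Matrix.transpose_apply, dotProduct, OGraph.inc,
    Matrix.of_apply]
  have key : ∀ k : Fin n,
      (if k = G.tgt e then (1 : ℝ) else if k = G.src e then -1 else 0) * x k
        = (if k = G.tgt e then x k else 0) - (if k = G.src e then x k else 0) := by
    intro k
    by_cases h1 : k = G.tgt e
    · have h2 : ¬ k = G.src e := fun h => hne (by rw [← h, ← h1])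
      rw [if_pos h1, if_pos h1, if_neg h2, one_mul, sub_zero]
    · rw [if_neg h1, if_neg h1]
      by_cases h2 : k = G.src e
      · rw [if_pos h2, if_pos h2]; ring
      · rw [if_neg h2, if_neg h2, zero_mul, sub_zero]
  rw [Finset.sum_congr rfl fun k _ => key k, Finset.sum_sub_distrib,
    Finset.sum_ite_eq', Finset.sum_ite_eq', if_pos (Finset.mem_univ _),
    if_pos (Finset.mem_univ _)]

lemma edgeDiff_coe (G : OGraph n m) (θ : Fin n → Real.Angle) (e : Fin m) :
    ((G.edgeDiff θ e : ℝ) : Real.Angle) = θ (G.tgt e) - θ (G.src e) :=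
  dcc_coe _ _

/-- Functions constant along edges are constant, by connectivity. -/
lemma const_of_edges {A : Type*} (G : OGraph n m) (hconn : G.Connected)
    (δ : Fin n → A) (h : ∀ e, δ (G.tgt e) = δ (G.src e)) (i j : Fin n) : δ i = δ j := by
  induction hconn i j with
  | refl => rfl
  | tail _ hadj ih =>
    obtain ⟨e, ⟨h1, h2⟩ | ⟨h1, h2⟩⟩ := hadj
    · rw [ih, ← h1, ← h2, h e]
    · rw [ih, ← h1, ← h2, ← h e]

lemma eq_zero_of_incT (G : OGraph n m) (hconn : G.Connected) (hn : 0 < n)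
    {x : Fin n → ℝ} (h1 : ∀ e, x (G.tgt e) = x (G.src e)) (h2 : ∑ i, x i = 0) :
    x = 0 := by
  have i0 : Fin n := ⟨0, hn⟩
  have hc : ∀ i, x i = x i0 := fun i => G.const_of_edges hconn x h1 i i0
  have hsum : ∑ i, x i = n * x i0 := by
    rw [Finset.sum_congr rfl fun i _ => hc i, Finset.sum_const, Finset.card_univ,
      Fintype.card_fin, nsmul_eq_mul]
  rw [h2] at hsum
  have hn' : (n : ℝ) ≠ 0 := Nat.cast_ne_zero.mpr hn.ne'
  have hx0 : x i0 = 0 := by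
    rcases mul_eq_zero.mp hsum.symm with h | h
    · exact absurd h hn'
    · exact h
  funext i
  rw [hc i, hx0]; rfl

lemma sgnVec_mem_ker (G : OGraph n m) (σ : G.Cycle) : G.inc.mulVec σ.sgnVec = 0 := by
  classical
  funext k
  simp only [Matrix.mulVec, dotProduct, Cycle.sgnVec, Pi.zero_apply]
  have step1 : ∀ e, G.inc k e * (∑ i : Fin (σ.k + 3),
      if σ.edge i = e then (if σ.dir i then (1:ℝ) else -1) else 0)
      = ∑ i : Fin (σ.k + 3),
        if σ.edge i = e then G.inc k e * (if σ.dir i then (1:ℝ) else -1) else 0 := by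
    intro e
    rw [Finset.mul_sum]
    exact Finset.sum_congr rfl fun i _ => by rw [mul_ite, mul_zero]
  rw [Finset.sum_congr rfl fun e _ => step1 e, Finset.sum_comm]
  have step2 : ∀ i : Fin (σ.k + 3), (∑ e,
      if σ.edge i = e then G.inc k e * (if σ.dir i then (1:ℝ) else -1) else 0)
      = (if σ.vert i = k then (1:ℝ) else 0) - (if σ.vert (i+1) = k then (1:ℝ) else 0) := by
    intro i
    rw [Finset.sum_ite_eq, if_pos (Finset.mem_univ _)]
    have hne := G.noLoop (σ.edge i)
    rcases hdir : σ.dir i with _ | _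
    · obtain ⟨hsrc, htgt⟩ := σ.neg_compat i hdir
      simp only [Bool.false_eq_true, if_false, OGraph.inc, Matrix.of_apply, htgt, hsrc]
      by_cases h1 : k = σ.vert (i + 1)
      · have h2 : ¬ (σ.vert i = k) := fun h => hne (by rw [hsrc, htgt, h, h1])
        rw [if_pos h1, if_neg h2, if_pos h1.symm]; ring
      · rw [if_neg h1, if_neg (fun h : σ.vert (i+1) = k => h1 h.symm)]
        by_cases h2 : k = σ.vert i
        · rw [if_pos h2, if_pos h2.symm]; ring
        · rw [if_neg h2, if_neg (fun h : σ.vert i = k => h2 h.symm), zero_mul, sub_zero]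
    · obtain ⟨htgt, hsrc⟩ := σ.pos_compat i hdir
      simp only [if_true, OGraph.inc, Matrix.of_apply, htgt, hsrc]
      by_cases h1 : k = σ.vert i
      · have h2 : ¬ (σ.vert (i+1) = k) := fun h => hne (by rw [hsrc, htgt, h, h1])
        rw [if_pos h1, if_pos h1.symm, if_neg h2]; ring
      · rw [if_neg h1]
        by_cases h2 : k = σ.vert (i + 1)
        · rw [if_pos h2, if_neg (fun h : σ.vert i = k => h1 h.symm), if_pos h2.symm]; ring
        · rw [if_neg h2, if_neg (fun h : σ.vert i = k => h1 h.symm),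
            if_neg (fun h : σ.vert (i+1) = k => h2 h.symm), zero_mul, sub_zero]
  rw [Finset.sum_congr rfl fun i _ => step2 i, Finset.sum_sub_distrib]
  have hre : ∑ i : Fin (σ.k + 3), (if σ.vert (i+1) = k then (1:ℝ) else 0)
      = ∑ i : Fin (σ.k + 3), (if σ.vert i = k then (1:ℝ) else 0) :=
    Fintype.sum_equiv (Equiv.addRight 1) _ _ (fun i => rfl)
  rw [hre, sub_self]

end OGraph

end Aux

section Aux2

open Real

variable {n m : ℕ}

namespace OGraph

lemma edge_injective (G : OGraph n m) (σ : G.Cycle) : Function.Injective σ.edge := by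
  intro i j hij
  by_contra hne
  have key : ∀ a b : Fin (σ.k + 3), σ.edge a = σ.edge b →
      σ.dir a = true → σ.dir b = false → False := by
    intro a b hab ha hb
    obtain ⟨hta, hsa⟩ := σ.pos_compat a ha
    obtain ⟨hsb, htb⟩ := σ.neg_compat b hb
    have h1 : a = b + 1 := σ.vertInj (by rw [← hta, hab, htb])
    have h2 : a + 1 = b := σ.vertInj (by rw [← hsa, hab, hsb])
    have h3 : b + 1 + 1 = b := by rw [← h1, h2]
    have h4 := congrArg Fin.val h3
    rw [Fin.val_add, Fin.val_add, Fin.val_one] at h4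
    have hlt := b.isLt
    rcases Nat.lt_or_ge (b.val + 1) (σ.k + 3) with h5 | h5
    · rw [Nat.mod_eq_of_lt h5] at h4
      rcases Nat.lt_or_ge (b.val + 1 + 1) (σ.k + 3) with h6 | h6
      · rw [Nat.mod_eq_of_lt h6] at h4; omega
      · have h7 : b.val + 1 + 1 = σ.k + 3 := by omega
        rw [h7, Nat.mod_self] at h4; omega
    · have h7 : b.val + 1 = σ.k + 3 := by omega
      rw [h7, Nat.mod_self, Nat.zero_add, Nat.mod_eq_of_lt (by omega)] at h4
      omega
  rcases hdi : σ.dir i with _ | _ <;> rcases hdj : σ.dir j with _ | _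
  · -- both false
    obtain ⟨hsi, _⟩ := σ.neg_compat i hdi
    obtain ⟨hsj, _⟩ := σ.neg_compat j hdj
    exact hne (σ.vertInj (by rw [← hsi, hij, hsj]))
  · exact key j i hij.symm hdj hdi
  · exact key i j hij hdi hdj
  · obtain ⟨hti, _⟩ := σ.pos_compat i hdi
    obtain ⟨htj, _⟩ := σ.pos_compat j hdj
    exact hne (σ.vertInj (by rw [← hti, hij, htj]))

lemma sgnVec_ne_zero (G : OGraph n m) (σ : G.Cycle) : σ.sgnVec ≠ 0 := by
  classical
  intro h
  have h0 := congrFun h (σ.edge 0)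
  rw [Cycle.sgnVec, Pi.zero_apply] at h0
  rw [Finset.sum_eq_single 0] at h0
  · rw [if_pos rfl] at h0
    split_ifs at h0 <;> norm_num at h0
  · intro j _ hj
    rw [if_neg (fun h => hj (G.edge_injective σ h))]
  · intro h; exact absurd (Finset.mem_univ _) h

lemma n_le_m (G : OGraph n m) (hcyc : Nonempty G.Cycle)
    (c : Fin (m + 1 - n) → G.Cycle) (hbasis : G.IsCycleBasis c) : n ≤ m := by
  by_contra h
  push_neg at h
  have hmn : m + 1 - n = 0 := by omega
  haveI : IsEmpty (Fin (m + 1 - n)) := by rw [hmn]; infer_instance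
  obtain ⟨σ⟩ := hcyc
  have hker : σ.sgnVec ∈ LinearMap.ker G.inc.mulVecLin := by
    rw [LinearMap.mem_ker, Matrix.mulVecLin_apply, G.sgnVec_mem_ker σ]
  rw [← hbasis.2, Set.range_eq_empty, Submodule.span_empty, Submodule.mem_bot] at hker
  exact G.sgnVec_ne_zero σ hker

lemma cycMatT_mulVec_injective (G : OGraph n m) (c : Fin (m + 1 - n) → G.Cycle)
    (hbasis : G.IsCycleBasis c) {w : Fin (m + 1 - n) → ℝ}
    (hw : (G.cycMat c)ᵀ.mulVec w = 0) : w = 0 := by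
  have hsum : ∑ i, w i • (c i).sgnVec = 0 := by
    funext e
    have := congrFun hw e
    simp only [Matrix.mulVec, dotProduct, Matrix.transpose_apply, Pi.zero_apply] at this ⊢
    simp only [Finset.sum_apply, Pi.smul_apply, smul_eq_mul, Pi.zero_apply]
    rw [← this]
    exact Finset.sum_congr rfl fun i _ => by rw [mul_comm]; rfl
  funext i
  exact (Fintype.linearIndependent_iff.mp hbasis.1) w hsum i

lemma cycMat_mulVec_Cdag (G : OGraph n m) (c : Fin (m + 1 - n) → G.Cycle)
    (hbasis : G.IsCycleBasis c) (Cdag : Matrix (Fin m) (Fin (m + 1 - n)) ℝ)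
    (hCdag : IsMoorePenrose (G.cycMat c) Cdag) (v : Fin (m + 1 - n) → ℝ) :
    (G.cycMat c).mulVec (Cdag.mulVec v) = v := by
  have key : (G.cycMat c)ᵀ * ((G.cycMat c) * Cdag) = (G.cycMat c)ᵀ := by
    have h1 := hCdag.1
    have h2 := hCdag.2.2.1
    calc (G.cycMat c)ᵀ * ((G.cycMat c) * Cdag) = (G.cycMat c)ᵀ * ((G.cycMat c) * Cdag)ᵀ := by
          rw [h2]
      _ = ((G.cycMat c) * Cdag * (G.cycMat c))ᵀ := by rw [Matrix.transpose_mul (G.cycMat c * Cdag) (G.cycMat c)]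
      _ = (G.cycMat c)ᵀ := by rw [h1]
  have hz : (G.cycMat c)ᵀ.mulVec ((G.cycMat c).mulVec (Cdag.mulVec v) - v) = 0 := by
    rw [Matrix.mulVec_sub, Matrix.mulVec_mulVec, Matrix.mulVec_mulVec, Matrix.mul_assoc, key,
      sub_self]
  have := G.cycMatT_mulVec_injective c hbasis hz
  rwa [sub_eq_zero] at this

lemma cycMat_mulVec_incT (G : OGraph n m) (c : Fin (m + 1 - n) → G.Cycle)
    (x : Fin n → ℝ) : (G.cycMat c).mulVec (G.incᵀ.mulVec x) = 0 := by
  funext i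
  have hker := congrFun (G.sgnVec_mem_ker (c i))
  simp only [Matrix.mulVec, dotProduct, Matrix.transpose_apply, Pi.zero_apply,
    OGraph.cycMat, Matrix.of_apply]
  have : ∀ e, (c i).sgnVec e * (∑ k, G.inc k e * x k)
      = ∑ k, (G.inc k e * (c i).sgnVec e) * x k := by
    intro e
    rw [Finset.mul_sum]
    exact Finset.sum_congr rfl fun k _ => by ring
  rw [Finset.sum_congr rfl fun e _ => this e, Finset.sum_comm]
  have hz : ∀ k, ∑ e, (G.inc k e * (c i).sgnVec e) * x k = 0 := by
    intro k
    rw [← Finset.sum_mul]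
    have := hker k
    simp only [Matrix.mulVec, dotProduct, Pi.zero_apply] at this
    rw [this, zero_mul]
  rw [Finset.sum_congr rfl fun k _ => hz k, Finset.sum_const, smul_zero]

lemma ker_incT_eq (G : OGraph n m) (hconn : G.Connected) (hn : 0 < n) :
    LinearMap.ker G.incᵀ.mulVecLin = Submodule.span ℝ {(fun _ => (1:ℝ) : Fin n → ℝ)} := by
  apply le_antisymm
  · intro x hx
    rw [LinearMap.mem_ker, Matrix.mulVecLin_apply] at hx
    have hc : ∀ e, x (G.tgt e) = x (G.src e) := by
      intro e
      have := congrFun hx e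
      rw [G.mulVec_transpose_apply, Pi.zero_apply, sub_eq_zero] at this
      exact this
    have i0 : Fin n := ⟨0, hn⟩
    have : x = x i0 • (fun _ => (1:ℝ)) := by
      funext i
      simp only [Pi.smul_apply, smul_eq_mul, mul_one]
      exact G.const_of_edges hconn x hc i i0
    rw [this]
    exact Submodule.smul_mem _ _ (Submodule.mem_span_singleton_self _)
  · rw [Submodule.span_le, Set.singleton_subset_iff]
    rw [SetLike.mem_coe, LinearMap.mem_ker, Matrix.mulVecLin_apply]
    funext e
    rw [G.mulVec_transpose_apply, Pi.zero_apply, sub_self]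

lemma ker_cycMat_eq_range_incT (G : OGraph n m) (hconn : G.Connected) (hn : 0 < n)
    (hcyc : Nonempty G.Cycle) (c : Fin (m + 1 - n) → G.Cycle) (hbasis : G.IsCycleBasis c)
    (Cdag : Matrix (Fin m) (Fin (m + 1 - n)) ℝ) (hCdag : IsMoorePenrose (G.cycMat c) Cdag) :
    LinearMap.ker (G.cycMat c).mulVecLin = LinearMap.range G.incᵀ.mulVecLin := by
  have hnm : n ≤ m := G.n_le_m hcyc c hbasis
  have hle : LinearMap.range G.incᵀ.mulVecLin ≤ LinearMap.ker (G.cycMat c).mulVecLin := by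
    rintro z ⟨x, rfl⟩
    rw [LinearMap.mem_ker, Matrix.mulVecLin_apply, Matrix.mulVecLin_apply]
    exact G.cycMat_mulVec_incT c x
  have hsurj : LinearMap.range (G.cycMat c).mulVecLin = ⊤ := by
    rw [LinearMap.range_eq_top]
    intro v
    refine ⟨Cdag.mulVec v, ?_⟩
    rw [Matrix.mulVecLin_apply]
    exact G.cycMat_mulVec_Cdag c hbasis Cdag hCdag v
  -- dimension counts
  have hd1 : Module.finrank ℝ (LinearMap.range (G.cycMat c).mulVecLin)
      + Module.finrank ℝ (LinearMap.ker (G.cycMat c).mulVecLin) = m := by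
    rw [LinearMap.finrank_range_add_finrank_ker, Module.finrank_fintype_fun_eq_card,
      Fintype.card_fin]
  have hd2 : Module.finrank ℝ (LinearMap.range (G.cycMat c).mulVecLin) = m + 1 - n := by
    rw [hsurj, finrank_top, Module.finrank_fintype_fun_eq_card, Fintype.card_fin]
  have hd3 : Module.finrank ℝ (LinearMap.range G.incᵀ.mulVecLin)
      + Module.finrank ℝ (LinearMap.ker G.incᵀ.mulVecLin) = n := by
    rw [LinearMap.finrank_range_add_finrank_ker, Module.finrank_fintype_fun_eq_card,
      Fintype.card_fin]
  have hd4 : Module.finrank ℝ (LinearMap.ker G.incᵀ.mulVecLin) = 1 := by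
    rw [G.ker_incT_eq hconn hn]
    apply finrank_span_singleton
    intro h
    have := congrFun h ⟨0, hn⟩
    simp at this
  symm
  apply Submodule.eq_of_le_of_finrank_le hle
  omega

end OGraph

end Aux2

section Aux3

open Real

variable {n m : ℕ}

lemma angle_toReal_continuousAt {x : Real.Angle}
    (hx : x ≠ ((-π : ℝ) : Real.Angle)) : ContinuousAt Real.Angle.toReal x := by
  haveI : Fact ((0:ℝ) < 2 * π) := ⟨by positivity⟩
  have hfun : Real.Angle.toReal
      = fun y : Real.Angle => ((AddCircle.equivIoc (2*π) (-π) y : ℝ)) := by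
    funext y
    induction y using Real.Angle.induction_on
    rw [Real.Angle.toReal_coe]
    rfl
  rw [hfun]
  exact continuous_subtype_val.continuousAt.comp (AddCircle.continuousAt_equivIoc _ _ hx)

lemma angle_ne_neg_pi_of_abs_lt {x : Real.Angle} (h : |x.toReal| < π) :
    x ≠ ((-π : ℝ) : Real.Angle) := by
  intro hx
  rw [hx, Real.Angle.coe_neg, Real.Angle.neg_coe_pi, Real.Angle.toReal_pi,
    abs_of_pos Real.pi_pos] at h
  exact lt_irrefl _ h

namespace OGraph

lemma winding_eq_sum (G : OGraph n m) {θ : Fin n → Real.Angle} (hθ : G.Punctured θ)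
    (σ : G.Cycle) :
    ∑ i : Fin (σ.k + 3), dcc (θ (σ.vert i)) (θ (σ.vert (i + 1)))
      = ∑ e, σ.sgnVec e * G.edgeDiff θ e := by
  classical
  have rhs : ∑ e, σ.sgnVec e * G.edgeDiff θ e
      = ∑ i : Fin (σ.k + 3), (if σ.dir i then (1:ℝ) else -1) * G.edgeDiff θ (σ.edge i) := by
    simp only [Cycle.sgnVec]
    have : ∀ e, (∑ i : Fin (σ.k + 3),
        if σ.edge i = e then (if σ.dir i then (1:ℝ) else -1) else 0) * G.edgeDiff θ e
        = ∑ i : Fin (σ.k + 3),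
          if σ.edge i = e then (if σ.dir i then (1:ℝ) else -1) * G.edgeDiff θ e else 0 := by
      intro e
      rw [Finset.sum_mul]
      exact Finset.sum_congr rfl fun i _ => by rw [ite_mul, zero_mul]
    rw [Finset.sum_congr rfl fun e _ => this e, Finset.sum_comm]
    exact Finset.sum_congr rfl fun i _ => by
      rw [Finset.sum_ite_eq, if_pos (Finset.mem_univ _)]
  rw [rhs]
  apply Finset.sum_congr rfl
  intro i _
  rcases hdir : σ.dir i with _ | _
  · obtain ⟨hsrc, htgt⟩ := σ.neg_compat i hdir
    have : G.edgeDiff θ (σ.edge i) = dcc (θ (σ.vert (i+1))) (θ (σ.vert i)) := by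
      unfold edgeDiff
      rw [htgt, hsrc]
    rw [this, if_neg (by simp [hdir]), dcc_rev (by rw [← this]; exact hθ (σ.edge i))]
    ring
  · obtain ⟨htgt, hsrc⟩ := σ.pos_compat i hdir
    have : G.edgeDiff θ (σ.edge i) = dcc (θ (σ.vert i)) (θ (σ.vert (i+1))) := by
      unfold edgeDiff
      rw [htgt, hsrc]
    rw [this, if_pos rfl, one_mul]

lemma cycMat_mulVec_edgeDiff (G : OGraph n m) (c : Fin (m + 1 - n) → G.Cycle)
    {θ : Fin n → Real.Angle} (hθ : G.Punctured θ) :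
    (G.cycMat c).mulVec (G.edgeDiff θ) = (2 * π) • G.windingMap c θ := by
  funext i
  simp only [Matrix.mulVec, dotProduct, OGraph.cycMat, Matrix.of_apply,
    Pi.smul_apply, smul_eq_mul, OGraph.windingMap, Cycle.winding]
  rw [← G.winding_eq_sum hθ (c i)]
  have hpi : (2 * π) ≠ 0 := by positivity
  field_simp

lemma continuous_edgeDiff_cell (G : OGraph n m) (c : Fin (m + 1 - n) → G.Cycle)
    (u : Fin (m + 1 - n) → ℝ) :
    Continuous (fun θ : G.windingCell c u => G.edgeDiff (θ : Fin n → Real.Angle)) := by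
  rw [continuous_pi_iff]
  intro e
  rw [continuous_iff_continuousAt]
  intro θ₀
  have hdiff : Continuous (fun θ : G.windingCell c u =>
      (θ : Fin n → Real.Angle) (G.src e) - (θ : Fin n → Real.Angle) (G.tgt e)) := by
    apply Continuous.sub
    · exact (continuous_apply (G.src e)).comp continuous_subtype_val
    · exact (continuous_apply (G.tgt e)).comp continuous_subtype_val
  have habs : |((θ₀ : Fin n → Real.Angle) (G.src e)
      - (θ₀ : Fin n → Real.Angle) (G.tgt e)).toReal| < π := by
    have := θ₀.2.1 e
    unfold OGraph.edgeDiff dcc at this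
    rwa [abs_neg] at this
  have hta : ContinuousAt Real.Angle.toReal
      ((θ₀ : Fin n → Real.Angle) (G.src e) - (θ₀ : Fin n → Real.Angle) (G.tgt e)) :=
    angle_toReal_continuousAt (angle_ne_neg_pi_of_abs_lt habs)
  have := ContinuousAt.comp (g := Real.Angle.toReal)
    (f := fun θ : G.windingCell c u =>
      (θ : Fin n → Real.Angle) (G.src e) - (θ : Fin n → Real.Angle) (G.tgt e))
    (x := θ₀) hta hdiff.continuousAt
  exact this.neg

end OGraph

end Aux3


/-- (Polytopic characterization, part 2: the map `ι` sending a
rotation class `[θ]` in the reduced winding cell to the unique `x ⟂ 1_n` with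
`Bᵀθ = Bᵀx + 2π C_Σ† u` is a continuous bijection onto the open polytope `P_u`,
and a homeomorphism on every compact subset). -/
theorem winding_cell_polytope_homeo {n m : ℕ} (hn : 0 < n) (G : OGraph n m)
    (hconn : G.Connected) (hcyc : Nonempty G.Cycle)
    (c : Fin (m + 1 - n) → G.Cycle) (hbasis : G.IsCycleBasis c)
    (Cdag : Matrix (Fin m) (Fin (m + 1 - n)) ℝ)
    (hCdag : IsMoorePenrose (G.cycMat c) Cdag)
    (u : Fin (m + 1 - n) → ℝ) (hu : u ∈ G.windingImage c)
    (ι : Quotient (cellSetoid G c u) → (Fin n → ℝ))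
    (hι : ∀ θ : G.windingCell c u,
      (∑ i, ι (Quotient.mk (cellSetoid G c u) θ) i = 0) ∧
      G.edgeDiff (θ : Fin n → Real.Angle) =
        G.incᵀ.mulVec (ι (Quotient.mk (cellSetoid G c u) θ)) + (2 * π) • Cdag.mulVec u) :
    Continuous ι ∧
    Set.BijOn ι Set.univ
      {x : Fin n → ℝ | (∑ i, x i = 0) ∧
        ∀ e, |(G.incᵀ.mulVec x + (2 * π) • Cdag.mulVec u) e| < π} ∧
    ∀ K : Set (Quotient (cellSetoid G c u)), IsCompact K →
      ∃ e : K ≃ₜ (ι '' K), ∀ k : K, (e k : Fin n → ℝ) = ι k.1 := by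
  classical
  -- the sum functional
  let S : (Fin n → ℝ) →ₗ[ℝ] ℝ :=
    { toFun := fun x => ∑ i, x i
      map_add' := fun x y => by simp [Finset.sum_add_distrib]
      map_smul' := fun r x => by simp [Finset.mul_sum] }
  let φ : (Fin n → ℝ) →ₗ[ℝ] (Fin m → ℝ) × ℝ := LinearMap.prod G.incᵀ.mulVecLin S
  have hφinj : LinearMap.ker φ = ⊥ := by
    rw [LinearMap.ker_eq_bot']
    intro x hx
    have h1 : G.incᵀ.mulVec x = 0 := congrArg Prod.fst hx
    have h2 : ∑ i, x i = 0 := congrArg Prod.snd hx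
    apply G.eq_zero_of_incT hconn hn _ h2
    intro e
    have := congrFun h1 e
    rw [G.mulVec_transpose_apply, Pi.zero_apply, sub_eq_zero] at this
    exact this
  obtain ⟨r, hr⟩ := φ.exists_leftInverse_of_injective hφinj
  have hrφ : ∀ x, r (φ x) = x := fun x => by
    have := LinearMap.congr_fun hr x
    simpa using this
  have hformula : ∀ θ : G.windingCell c u,
      ι (Quotient.mk (cellSetoid G c u) θ)
        = r (G.edgeDiff (θ : Fin n → Real.Angle) - (2 * π) • Cdag.mulVec u, 0) := by
    intro θ
    have h1 := (hι θ).1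
    have h2 := (hι θ).2
    have hfst : G.incᵀ.mulVecLin (ι (Quotient.mk (cellSetoid G c u) θ))
        = G.edgeDiff (θ : Fin n → Real.Angle) - (2 * π) • Cdag.mulVec u := by
      rw [Matrix.mulVecLin_apply, h2]; abel
    have hφx : φ (ι (Quotient.mk (cellSetoid G c u) θ))
        = (G.edgeDiff (θ : Fin n → Real.Angle) - (2 * π) • Cdag.mulVec u, (0:ℝ)) := by
      rw [LinearMap.prod_apply, Function.prod, Prod.mk.injEq]
      exact ⟨hfst, h1⟩
    rw [← hφx, hrφ]
  -- continuity
  have hcont : Continuous ι := by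
    have hcomp : Continuous (fun θ : G.windingCell c u =>
        ι (Quotient.mk (cellSetoid G c u) θ)) := by
      have heq : (fun θ : G.windingCell c u => ι (Quotient.mk (cellSetoid G c u) θ))
          = fun θ : G.windingCell c u =>
              r (G.edgeDiff (θ : Fin n → Real.Angle) - (2 * π) • Cdag.mulVec u, 0) :=
        funext hformula
      rw [heq]
      exact (LinearMap.continuous_of_finiteDimensional r).comp
        (((G.continuous_edgeDiff_cell c u).sub continuous_const).prodMk continuous_const)
    exact isQuotientMap_quot_mk.continuous_iff.mpr hcomp
  -- injectivity
  have hinj : ∀ q1 q2, ι q1 = ι q2 → q1 = q2 := by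
    intro q1 q2
    refine Quotient.inductionOn₂ q1 q2 ?_
    intro θ ψ h
    have hED : G.edgeDiff (θ : Fin n → Real.Angle) = G.edgeDiff (ψ : Fin n → Real.Angle) := by
      rw [(hι θ).2, (hι ψ).2, h]
    have hangle : ∀ e,
        (ψ : Fin n → Real.Angle) (G.tgt e) - (θ : Fin n → Real.Angle) (G.tgt e)
          = (ψ : Fin n → Real.Angle) (G.src e) - (θ : Fin n → Real.Angle) (G.src e) := by
      intro e
      have h1 := G.edgeDiff_coe (θ : Fin n → Real.Angle) e
      have h2 := G.edgeDiff_coe (ψ : Fin n → Real.Angle) e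
      rw [hED] at h1
      have h3 := h1.symm.trans h2
      rw [sub_eq_sub_iff_sub_eq_sub]
      exact h3.symm
    have hconst := G.const_of_edges hconn
      (fun i => (ψ : Fin n → Real.Angle) i - (θ : Fin n → Real.Angle) i) hangle
    apply Quotient.sound
    refine ⟨((ψ : Fin n → Real.Angle) ⟨0, hn⟩ - (θ : Fin n → Real.Angle) ⟨0, hn⟩).toReal,
      fun i => ?_⟩
    rw [Real.Angle.coe_toReal]
    have := hconst i ⟨0, hn⟩
    rw [← this]
    abel
  -- maps-to
  have hmaps : ∀ q, (∑ i, ι q i = 0) ∧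
      ∀ e, |(G.incᵀ.mulVec (ι q) + (2 * π) • Cdag.mulVec u) e| < π := by
    intro q
    obtain ⟨θ, rfl⟩ := q.exists_rep
    refine ⟨(hι θ).1, fun e => ?_⟩
    rw [← (hι θ).2]
    exact θ.2.1 e
  -- surjectivity
  have hsurj : ∀ x : Fin n → ℝ, (∑ i, x i = 0) →
      (∀ e, |(G.incᵀ.mulVec x + (2 * π) • Cdag.mulVec u) e| < π) → ∃ q, ι q = x := by
    intro x hx1 hx2
    obtain ⟨θ₀, hθ₀p, hθ₀w⟩ := hu
    set y : Fin m → ℝ := G.incᵀ.mulVec x + (2 * π) • Cdag.mulVec u with hy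
    have hCy : (G.cycMat c).mulVec y = (2 * π) • u := by
      rw [hy, Matrix.mulVec_add, Matrix.mulVec_smul, G.cycMat_mulVec_incT,
        G.cycMat_mulVec_Cdag c hbasis Cdag hCdag, zero_add]
    have hCy0 : (G.cycMat c).mulVec (G.edgeDiff θ₀) = (2 * π) • u := by
      rw [G.cycMat_mulVec_edgeDiff c hθ₀p, hθ₀w]
    have hker : y - G.edgeDiff θ₀ ∈ LinearMap.ker (G.cycMat c).mulVecLin := by
      rw [LinearMap.mem_ker, map_sub, Matrix.mulVecLin_apply, Matrix.mulVecLin_apply,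
        hCy, hCy0, sub_self]
    rw [G.ker_cycMat_eq_range_incT hconn hn hcyc c hbasis Cdag hCdag] at hker
    obtain ⟨x'', hx''⟩ := hker
    rw [Matrix.mulVecLin_apply] at hx''
    set θ : Fin n → Real.Angle := fun i => θ₀ i + ((x'' i : ℝ) : Real.Angle) with hθdef
    have hEq : ∀ e, θ (G.tgt e) - θ (G.src e) = ((y e : ℝ) : Real.Angle) := by
      intro e
      have h1 : θ (G.tgt e) - θ (G.src e)
          = (θ₀ (G.tgt e) - θ₀ (G.src e))
            + ((x'' (G.tgt e) - x'' (G.src e) : ℝ) : Real.Angle) := by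
        simp only [hθdef]
        rw [Real.Angle.coe_sub]
        abel
      have h2 : x'' (G.tgt e) - x'' (G.src e) = y e - G.edgeDiff θ₀ e := by
        rw [← G.mulVec_transpose_apply x'' e, hx'', Pi.sub_apply]
      rw [h1, ← G.edgeDiff_coe θ₀ e, h2, ← Real.Angle.coe_add]
      congr 1
      ring
    have hED : G.edgeDiff θ = y := by
      funext e
      exact dcc_eq_self (hx2 e) (hEq e)
    have hp : G.Punctured θ := fun e => by rw [hED]; exact hx2 e
    have hw : G.windingMap c θ = u := by
      have h3 : (2 * π) • G.windingMap c θ = (2 * π) • u := by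
        rw [← G.cycMat_mulVec_edgeDiff c hp, hED, hCy]
      have hpi : (2 * π) ≠ 0 := by positivity
      funext i
      have h4 := congrFun h3 i
      simp only [Pi.smul_apply, smul_eq_mul] at h4
      exact mul_left_cancel₀ hpi h4
    refine ⟨Quotient.mk (cellSetoid G c u) ⟨θ, hp, hw⟩, ?_⟩
    have h4 := (hι ⟨θ, hp, hw⟩).2
    have h5 := (hι ⟨θ, hp, hw⟩).1
    have h6 : G.incᵀ.mulVec (ι (Quotient.mk (cellSetoid G c u) ⟨θ, hp, hw⟩))
        = G.incᵀ.mulVec x := by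
      have h7 : G.incᵀ.mulVec (ι (Quotient.mk (cellSetoid G c u) ⟨θ, hp, hw⟩))
          + (2 * π) • Cdag.mulVec u
          = G.incᵀ.mulVec x + (2 * π) • Cdag.mulVec u := by
        rw [← h4, hED, hy]
      exact add_right_cancel h7
    have h8 : ι (Quotient.mk (cellSetoid G c u) ⟨θ, hp, hw⟩) - x = 0 := by
      apply G.eq_zero_of_incT hconn hn
      · intro e
        have h9 := congrFun h6 e
        rw [G.mulVec_transpose_apply, G.mulVec_transpose_apply] at h9
        simp only [Pi.sub_apply]
        linarith
      · simp only [Pi.sub_apply]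
        rw [Finset.sum_sub_distrib, h5, hx1, sub_self]
    rw [← sub_eq_zero]
    exact h8
  refine ⟨hcont, ⟨fun q _ => hmaps q, fun q1 _ q2 _ h => hinj q1 q2 h, fun x hx => ?_⟩, ?_⟩
  · obtain ⟨q, hq⟩ := hsurj x hx.1 hx.2
    exact ⟨q, Set.mem_univ _, hq⟩
  · intro K hK
    haveI : CompactSpace K := isCompact_iff_compactSpace.mp hK
    have hinjOn : Set.InjOn ι K := fun a _ b _ h => hinj a b h
    let eqv : K ≃ (ι '' K) := Equiv.Set.imageOfInjOn ι K hinjOn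
    have hce : Continuous eqv := by
      apply Continuous.subtype_mk
      exact hcont.comp continuous_subtype_val
    exact ⟨hce.homeoOfEquivCompactToT2, fun k => rfl⟩


end
end
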